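/- With notation as above (M ≥ 1, gcd(a₁,…,aₙ,M)=1, cᵢ = gcd of the list omitting aᵢ together with M, C = ∏cᵢ, and r ≡ lC + Σ aᵢbᵢ (mod M) with 0 ≤ bᵢ < cᵢ): if integers u₁, …, uₙ satisfy Σᵢ aᵢuᵢ ≡ r (mod M), then uⱼ ≡ bⱼ (mod cⱼ) for every j. -/

import Mathlib

open Finset

/-- If `r ≡ lC + Σ aᵢbᵢ (mod M)` with `0 ≤ bᵢ < cᵢ` and
`Σ aᵢuᵢ ≡ r (mod M)`, then `uⱼ ≡ bⱼ (mod cⱼ)` for every `j`. -/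
theorem u_congr_b (n : ℕ) (M : ℕ) (hM : 1 ≤ M) (a : Fin n → ℤ)
    (h : Nat.gcd ((univ : Finset (Fin n)).gcd fun i => (a i).natAbs) M = 1)
    (c : Fin n → ℕ)
    (hc : ∀ i, c i = Nat.gcd (((univ : Finset (Fin n)).erase i).gcd fun j => (a j).natAbs) M)
    (r l : ℤ) (b : Fin n → ℤ)
    (hb : ∀ i, 0 ≤ b i ∧ b i < (c i : ℤ))
    (hr : r ≡ l * (∏ i, (c i : ℤ)) + ∑ i, a i * b i [ZMOD (M : ℤ)])
    (u : Fin n → ℤ)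
    (hu : (∑ i, a i * u i) ≡ r [ZMOD (M : ℤ)]) :
    ∀ j, u j ≡ b j [ZMOD (c j : ℤ)] := by
  intro j
  set d : ℤ := (c j : ℤ) with hd
  have hcM : c j ∣ M := by rw [hc j]; exact Nat.gcd_dvd_right _ _
  have hcjM : d ∣ (M : ℤ) := Int.natCast_dvd_natCast.mpr hcM
  have hcai : ∀ i, i ≠ j → c j ∣ (a i).natAbs := by
    intro i hij
    rw [hc j]
    exact (Nat.gcd_dvd_left _ _).trans
      (Finset.gcd_dvd (Finset.mem_erase.mpr ⟨hij, Finset.mem_univ i⟩))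
  have hai : ∀ i, i ≠ j → d ∣ a i := fun i hij =>
    Int.dvd_natAbs.mp (Int.natCast_dvd_natCast.mpr (hcai i hij))
  -- coprimality of a j and c j
  have hcop : Int.gcd d (a j) = 1 := by
    have hdvd : Nat.gcd (a j).natAbs (c j) ∣
        Nat.gcd ((univ : Finset (Fin n)).gcd fun i => (a i).natAbs) M := by
      apply Nat.dvd_gcd
      · apply Finset.dvd_gcd
        intro i _
        by_cases hij : i = j
        · subst hij; exact Nat.gcd_dvd_left _ _
        · exact (Nat.gcd_dvd_right _ _).trans (hcai i hij)
      · exact (Nat.gcd_dvd_right _ _).trans hcM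
    have h1 : Nat.gcd (a j).natAbs (c j) = 1 := Nat.eq_one_of_dvd_one (h ▸ hdvd)
    have : Int.gcd (a j) d = Nat.gcd (a j).natAbs (c j) := by
      simp [Int.gcd, hd]
    rw [Int.gcd_comm, this, h1]
  -- main congruence mod d
  have h1' : d ∣ (l * (∏ i, (c i : ℤ)) + ∑ i, a i * b i) - ∑ i, a i * u i :=
    hcjM.trans (hu.trans hr).dvd
  have e1 : d ∣ l * ∏ i, (c i : ℤ) :=
    Dvd.dvd.mul_left (Finset.dvd_prod_of_mem (fun i => (c i : ℤ)) (mem_univ j)) l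
  have e2 : d ∣ ∑ i ∈ univ.erase j, a i * b i :=
    Finset.dvd_sum fun i hi => ((hai i (Finset.mem_erase.mp hi).1).mul_right _)
  have e3 : d ∣ ∑ i ∈ univ.erase j, a i * u i :=
    Finset.dvd_sum fun i hi => ((hai i (Finset.mem_erase.mp hi).1).mul_right _)
  have key : d ∣ a j * b j - a j * u j := by
    have h4 := ((h1'.sub e1).sub e2).add e3
    convert h4 using 1
    case e'_2 => rfl
    rw [← Finset.sum_erase_add univ (fun i => a i * b i) (mem_univ j),
        ← Finset.sum_erase_add univ (fun i => a i * u i) (mem_univ j)]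
    ring
  have key' : d ∣ a j * (b j - u j) := by rw [mul_sub]; exact key
  have : d ∣ b j - u j := Int.dvd_of_dvd_mul_right_of_gcd_one key' hcop
  exact Int.ModEq.symm (Int.modEq_iff_dvd.mpr (by simpa using this)).symm
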